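/- Let G be a finite simple graph with maximum degree Δ(G) = 4, and suppose every proper subgraph H of G satisfies χ_i(H) ≤ 6. If G contains two adjacent vertices of degree 3, each of which is adjacent to some (possibly the same) vertex of degree 2, then χ_i(G) ≤ 6. -/

import Mathlib

open SimpleGraph

/-- An injective coloring of `G`: any two distinct vertices with a common neighbor
receive distinct colors. -/
def IsInjColoring {V α : Type*} (G : SimpleGraph V) (c : V → α) : Prop :=
  ∀ ⦃u v : V⦄, u ≠ v → (∃ w, G.Adj u w ∧ G.Adj v w) → c u ≠ c v

/-- The injective chromatic number of `G`: the least `k` such that `G` has an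
injective coloring with `k` colors. -/
noncomputable def injChromNum {V : Type*} (G : SimpleGraph V) : ℕ :=
  sInf {k | ∃ c : V → Fin k, IsInjColoring G c}

lemma exists_coloring_of_le {W : Type*} [Fintype W] (G' : SimpleGraph W)
    (h : injChromNum G' ≤ 6) : ∃ c : W → Fin 6, IsInjColoring G' c := by
  classical
  have hne : ({k | ∃ c : W → Fin k, IsInjColoring G' c} : Set ℕ).Nonempty := by
    refine ⟨Fintype.card W, fun w => (Fintype.equivFin W) w, ?_⟩
    intro u v huv _ hcc
    exact huv ((Fintype.equivFin W).injective hcc)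
  have hmem := Nat.sInf_mem hne
  obtain ⟨c, hc⟩ := hmem
  refine ⟨fun w => Fin.castLE h (c w), ?_⟩
  intro u v huv hconf hcc
  exact hc huv hconf (Fin.castLE_injective _ hcc)

lemma le_of_coloring {V' : Type*} (G' : SimpleGraph V') (c : V' → Fin 6)
    (hc : IsInjColoring G' c) : injChromNum G' ≤ 6 :=
  Nat.sInf_le ⟨c, hc⟩

lemma pick_color (F : Finset (Fin 6)) (hF : F.card ≤ 5) : ∃ a, a ∉ F := by
  by_contra hcon
  push_neg at hcon
  have hsub : (Finset.univ : Finset (Fin 6)) ⊆ F := fun a _ => hcon a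
  have := Finset.card_le_card hsub
  simp at this
  omega

lemma exists_not_mem' {V : Type*} [DecidableEq V] {s t : Finset V} (ht : t ⊆ s)
    (h : t.card < s.card) : ∃ w ∈ s, w ∉ t := by
  have hne : (s \ t).Nonempty := by
    rw [← Finset.card_pos, Finset.card_sdiff_of_subset ht]; omega
  obtain ⟨w, hw⟩ := hne
  rw [Finset.mem_sdiff] at hw
  exact ⟨w, hw.1, hw.2⟩

set_option maxHeartbeats 4000000 in
/-- (RC5 for `Δ = 4`.)  Suppose `Δ(G) = 4` and every proper subgraph `H` of `G`
satisfies `χᵢ(H) ≤ 6`.  If `G` has two adjacent `3`-vertices, each adjacent to some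
(possibly the same) `2`-vertex, then `χᵢ(G) ≤ 6`. -/
theorem rc5_maxDegree_four {V : Type*} [Fintype V] (G : SimpleGraph V)
    [DecidableRel G.Adj] (hΔ : G.maxDegree = 4)
    (hmin : ∀ H : G.Subgraph, H ≠ ⊤ → injChromNum H.coe ≤ 6)
    (h : ∃ u₁ u₂ v₁ v₂ : V, G.Adj u₁ u₂ ∧ G.degree u₁ = 3 ∧ G.degree u₂ = 3 ∧
      G.Adj u₁ v₁ ∧ G.degree v₁ = 2 ∧ G.Adj u₂ v₂ ∧ G.degree v₂ = 2) :
    injChromNum G ≤ 6 := by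
  classical
  obtain ⟨u₁, u₂, v₁, v₂, hadj12, hd1, hd2, hadj11, hdv1, hadj22, hdv2⟩ := h
  -- the proper subgraph obtained by deleting the edge u₁u₂
  set H : G.Subgraph :=
    { verts := Set.univ
      Adj := fun a b => G.Adj a b ∧ ¬((a = u₁ ∧ b = u₂) ∨ (a = u₂ ∧ b = u₁))
      adj_sub := fun hab => hab.1
      edge_vert := fun _ => trivial
      symm := by constructor; intro a b hab; exact ⟨hab.1.symm, by tauto⟩ } with hHdef
  have hHadj : ∀ a b : V, H.Adj a b ↔
      (G.Adj a b ∧ ¬((a = u₁ ∧ b = u₂) ∨ (a = u₂ ∧ b = u₁))) := fun a b => Iff.rfl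
  have hHne : H ≠ ⊤ := by
    intro heq
    have h2 : H.Adj u₁ u₂ := by rw [heq]; exact hadj12
    exact h2.2 (Or.inl ⟨rfl, rfl⟩)
  haveI : Fintype ↥H.verts := Fintype.ofFinite _
  obtain ⟨c, hc⟩ := exists_coloring_of_le _ (hmin H hHne)
  set c₀ : V → Fin 6 := fun v => c ⟨v, trivial⟩ with hc₀def
  have hc₀ : ∀ a b : V, a ≠ b → (∃ w, H.Adj a w ∧ H.Adj b w) → c₀ a ≠ c₀ b := by
    rintro a b hab ⟨w, h1, h2⟩
    refine hc (u := ⟨a, trivial⟩) (v := ⟨b, trivial⟩) ?_ ?_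
    · intro he; exact hab (congrArg Subtype.val he)
    · exact ⟨⟨w, trivial⟩, h1, h2⟩
  -- notation
  set N : V → Finset V := fun v => G.neighborFinset v with hNdef
  have hmem : ∀ a b : V, b ∈ N a ↔ G.Adj a b := fun a b => mem_neighborFinset G a b
  have hcard : ∀ a : V, (N a).card = G.degree a := fun a => G.card_neighborFinset_eq_degree a
  have hdegle : ∀ a : V, (N a).card ≤ 4 := fun a => by
    rw [hcard]; rw [← hΔ]; exact G.degree_le_maxDegree a
  -- basic distinctness
  have ne12 : u₁ ≠ u₂ := G.ne_of_adj hadj12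
  have ne1v1 : u₁ ≠ v₁ := G.ne_of_adj hadj11
  have ne2v2 : u₂ ≠ v₂ := G.ne_of_adj hadj22
  have ne1v2 : u₁ ≠ v₂ := fun he => by rw [he, hdv2] at hd1; omega
  have ne2v1 : u₂ ≠ v₁ := fun he => by rw [he, hdv1] at hd2; omega
  -- third neighbours
  obtain ⟨w₁, hw₁mem, hw₁not⟩ : ∃ w ∈ N u₁, w ∉ ({u₂, v₁} : Finset V) := by
    apply exists_not_mem'
    · intro x hx
      rcases Finset.mem_insert.mp hx with rfl | hx
      · exact (hmem _ _).mpr hadj12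
      · rw [Finset.mem_singleton] at hx; subst hx; exact (hmem _ _).mpr hadj11
    · rw [Finset.card_insert_of_notMem (by simp [ne2v1]), Finset.card_singleton,
        hcard, hd1]; omega
  obtain ⟨w₂, hw₂mem, hw₂not⟩ : ∃ w ∈ N u₂, w ∉ ({u₁, v₂} : Finset V) := by
    apply exists_not_mem'
    · intro x hx
      rcases Finset.mem_insert.mp hx with rfl | hx
      · exact (hmem _ _).mpr hadj12.symm
      · rw [Finset.mem_singleton] at hx; subst hx; exact (hmem _ _).mpr hadj22
    · rw [Finset.card_insert_of_notMem (by simp [ne1v2]), Finset.card_singleton,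
        hcard, hd2]; omega
  obtain ⟨x₁, hx₁mem, hx₁not⟩ : ∃ w ∈ N v₁, w ∉ ({u₁} : Finset V) := by
    apply exists_not_mem'
    · intro x hx
      rw [Finset.mem_singleton] at hx; subst hx; exact (hmem _ _).mpr hadj11.symm
    · rw [Finset.card_singleton, hcard, hdv1]; omega
  obtain ⟨x₂, hx₂mem, hx₂not⟩ : ∃ w ∈ N v₂, w ∉ ({u₂} : Finset V) := by
    apply exists_not_mem'
    · intro x hx
      rw [Finset.mem_singleton] at hx; subst hx; exact (hmem _ _).mpr hadj22.symm
    · rw [Finset.card_singleton, hcard, hdv2]; omega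
  rw [Finset.mem_insert, Finset.mem_singleton] at hw₁not hw₂not
  rw [Finset.mem_singleton] at hx₁not hx₂not
  push_neg at hw₁not hw₂not
  -- coverage of neighbourhoods
  have hcov1 : N u₁ = {u₂, v₁, w₁} := by
    refine (Finset.eq_of_subset_of_card_le ?_ ?_).symm
    · intro x hx
      rcases Finset.mem_insert.mp hx with rfl | hx
      · exact (hmem _ _).mpr hadj12
      rcases Finset.mem_insert.mp hx with rfl | hx
      · exact (hmem _ _).mpr hadj11
      · rw [Finset.mem_singleton] at hx; subst hx; exact hw₁mem
    · rw [hcard, hd1,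
        Finset.card_insert_of_notMem (by simp [ne2v1, Ne.symm hw₁not.1]),
        Finset.card_insert_of_notMem (by simp [Ne.symm hw₁not.2]),
        Finset.card_singleton]
  have hcov2 : N u₂ = {u₁, v₂, w₂} := by
    refine (Finset.eq_of_subset_of_card_le ?_ ?_).symm
    · intro x hx
      rcases Finset.mem_insert.mp hx with rfl | hx
      · exact (hmem _ _).mpr hadj12.symm
      rcases Finset.mem_insert.mp hx with rfl | hx
      · exact (hmem _ _).mpr hadj22
      · rw [Finset.mem_singleton] at hx; subst hx; exact hw₂mem
    · rw [hcard, hd2,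
        Finset.card_insert_of_notMem (by simp [ne1v2, Ne.symm hw₂not.1]),
        Finset.card_insert_of_notMem (by simp [Ne.symm hw₂not.2]),
        Finset.card_singleton]
  have hcovv1 : N v₁ = {u₁, x₁} := by
    refine (Finset.eq_of_subset_of_card_le ?_ ?_).symm
    · intro x hx
      rcases Finset.mem_insert.mp hx with rfl | hx
      · exact (hmem _ _).mpr hadj11.symm
      · rw [Finset.mem_singleton] at hx; subst hx; exact hx₁mem
    · rw [hcard, hdv1, Finset.card_insert_of_notMem (by simp [Ne.symm hx₁not]),
        Finset.card_singleton]
  have hcovv2 : N v₂ = {u₂, x₂} := by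
    refine (Finset.eq_of_subset_of_card_le ?_ ?_).symm
    · intro x hx
      rcases Finset.mem_insert.mp hx with rfl | hx
      · exact (hmem _ _).mpr hadj22.symm
      · rw [Finset.mem_singleton] at hx; subst hx; exact hx₂mem
    · rw [hcard, hdv2, Finset.card_insert_of_notMem (by simp [Ne.symm hx₂not]),
        Finset.card_singleton]
  -- handy adjacency facts
  have hadj1w : G.Adj u₁ w₁ := (hmem _ _).mp hw₁mem
  have hadj2w : G.Adj u₂ w₂ := (hmem _ _).mp hw₂mem
  have hadjvx1 : G.Adj v₁ x₁ := (hmem _ _).mp hx₁mem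
  have hadjvx2 : G.Adj v₂ x₂ := (hmem _ _).mp hx₂mem
  -- cardinality bounds on the conflict sets
  have cardsd : ∀ (z : V) (s : Finset V), s ⊆ N z → ((N z) \ s).card = (N z).card - s.card :=
    fun z s hs => Finset.card_sdiff_of_subset hs
  have cA1 : ((N u₂) \ ({u₁, v₂} : Finset V)).card = 1 := by
    rw [cardsd u₂ {u₁, v₂} (by
      intro x hx
      rcases Finset.mem_insert.mp hx with rfl | hx
      · exact (hmem _ _).mpr hadj12.symm
      · rw [Finset.mem_singleton] at hx; subst hx; exact (hmem _ _).mpr hadj22),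
      hcard, hd2, Finset.card_insert_of_notMem (by simp [ne1v2]), Finset.card_singleton]
  have cA2 : ((N v₁) \ ({u₁} : Finset V)).card = 1 := by
    rw [cardsd v₁ {u₁} (by simp [hmem, hadj11.symm]), hcard, hdv1, Finset.card_singleton]
  have cA3 : ((N w₁) \ ({u₁} : Finset V)).card ≤ 3 := by
    rw [cardsd w₁ {u₁} (by simp [hmem, hadj1w.symm]), Finset.card_singleton]
    have := hdegle w₁; omega
  have cB1 : ((N u₁) \ ({u₂, v₁} : Finset V)).card = 1 := by
    rw [cardsd u₁ {u₂, v₁} (by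
      intro x hx
      rcases Finset.mem_insert.mp hx with rfl | hx
      · exact (hmem _ _).mpr hadj12
      · rw [Finset.mem_singleton] at hx; subst hx; exact (hmem _ _).mpr hadj11),
      hcard, hd1, Finset.card_insert_of_notMem (by simp [ne2v1]), Finset.card_singleton]
  have cB2 : ((N v₂) \ ({u₂} : Finset V)).card = 1 := by
    rw [cardsd v₂ {u₂} (by simp [hmem, hadj22.symm]), hcard, hdv2, Finset.card_singleton]
  have cB3 : ((N w₂) \ ({u₂} : Finset V)).card ≤ 3 := by
    rw [cardsd w₂ {u₂} (by simp [hmem, hadj2w.symm]), Finset.card_singleton]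
    have := hdegle w₂; omega
  have cD1 : ((N u₁) \ ({v₁} : Finset V)).card = 2 := by
    rw [cardsd u₁ {v₁} (by simp [hmem, hadj11]), hcard, hd1, Finset.card_singleton]
  have cD2 : ((N x₁) \ ({v₁} : Finset V)).card ≤ 3 := by
    rw [cardsd x₁ {v₁} (by simp [hmem, hadjvx1.symm]), Finset.card_singleton]
    have := hdegle x₁; omega
  have cE1 : ((N u₂) \ ({v₂} : Finset V)).card = 2 := by
    rw [cardsd u₂ {v₂} (by simp [hmem, hadj22]), hcard, hd2, Finset.card_singleton]
  have cE2 : ((N x₂) \ ({v₂} : Finset V)).card ≤ 3 := by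
    rw [cardsd x₂ {v₂} (by simp [hmem, hadjvx2.symm]), Finset.card_singleton]
    have := hdegle x₂; omega
  -- the conflict "base" sets
  set Ba : Finset V := (N u₂ ∪ N v₁ ∪ N w₁) \ {u₁, u₂, v₁, v₂} with hBadef
  set Bb : Finset V := (N u₁ ∪ N v₂ ∪ N w₂) \ {u₂, v₁, v₂} with hBbdef
  set Bd : Finset V := (N u₁ ∪ N x₁) \ {v₁, v₂} with hBddef
  set Be : Finset V := (N u₂ ∪ N x₂) \ {v₂} with hBedef
  have hBa : Ba.card ≤ 5 := by
    have hsub : Ba ⊆ ((N u₂) \ ({u₁, v₂} : Finset V)) ∪ ((N v₁) \ ({u₁} : Finset V))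
        ∪ ((N w₁) \ ({u₁} : Finset V)) := by
      intro t ht
      simp only [hBadef, Finset.mem_sdiff, Finset.mem_union, Finset.mem_insert,
        Finset.mem_singleton] at ht ⊢
      tauto
    have h1 := Finset.card_le_card hsub
    have h2 := Finset.card_union_le ((N u₂) \ ({u₁, v₂} : Finset V) ∪ (N v₁) \ ({u₁} : Finset V))
      ((N w₁) \ ({u₁} : Finset V))
    have h3 := Finset.card_union_le ((N u₂) \ ({u₁, v₂} : Finset V)) ((N v₁) \ ({u₁} : Finset V))
    omega
  have hBb : Bb.card ≤ 5 := by
    have hsub : Bb ⊆ ((N u₁) \ ({u₂, v₁} : Finset V)) ∪ ((N v₂) \ ({u₂} : Finset V))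
        ∪ ((N w₂) \ ({u₂} : Finset V)) := by
      intro t ht
      simp only [hBbdef, Finset.mem_sdiff, Finset.mem_union, Finset.mem_insert,
        Finset.mem_singleton] at ht ⊢
      tauto
    have h1 := Finset.card_le_card hsub
    have h2 := Finset.card_union_le ((N u₁) \ ({u₂, v₁} : Finset V) ∪ (N v₂) \ ({u₂} : Finset V))
      ((N w₂) \ ({u₂} : Finset V))
    have h3 := Finset.card_union_le ((N u₁) \ ({u₂, v₁} : Finset V)) ((N v₂) \ ({u₂} : Finset V))
    omega
  have hBd : Bd.card ≤ 5 := by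
    have hsub : Bd ⊆ ((N u₁) \ ({v₁} : Finset V)) ∪ ((N x₁) \ ({v₁} : Finset V)) := by
      intro t ht
      simp only [hBddef, Finset.mem_sdiff, Finset.mem_union, Finset.mem_insert,
        Finset.mem_singleton] at ht ⊢
      tauto
    have h1 := Finset.card_le_card hsub
    have h3 := Finset.card_union_le ((N u₁) \ ({v₁} : Finset V)) ((N x₁) \ ({v₁} : Finset V))
    omega
  have hBe : Be.card ≤ 5 := by
    have hsub : Be ⊆ ((N u₂) \ ({v₂} : Finset V)) ∪ ((N x₂) \ ({v₂} : Finset V)) := by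
      intro t ht
      simp only [hBedef, Finset.mem_sdiff, Finset.mem_union, Finset.mem_singleton] at ht ⊢
      tauto
    have h1 := Finset.card_le_card hsub
    have h3 := Finset.card_union_le ((N u₂) \ ({v₂} : Finset V)) ((N x₂) \ ({v₂} : Finset V))
    omega
  -- choose the new colors greedily
  obtain ⟨a, ha⟩ := pick_color (Ba.image c₀) ((Finset.card_image_le).trans hBa)
  set c₁ : V → Fin 6 := fun z => if z = u₁ then a else c₀ z with hc₁def
  obtain ⟨b, hb⟩ := pick_color (Bb.image c₁) ((Finset.card_image_le).trans hBb)
  set c₂ : V → Fin 6 := fun z => if z = u₂ then b else c₁ z with hc₂def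
  obtain ⟨d, hd⟩ := pick_color (Bd.image c₂) ((Finset.card_image_le).trans hBd)
  set c₃ : V → Fin 6 := fun z => if z = v₁ then d else c₂ z with hc₃def
  obtain ⟨e, he⟩ := pick_color (Be.image c₃) ((Finset.card_image_le).trans hBe)
  set c₄ : V → Fin 6 := fun z => if z = v₂ then e else c₃ z with hc₄def
  -- evaluation facts
  have ev_out : ∀ t : V, t ≠ u₁ → t ≠ u₂ → t ≠ v₁ → t ≠ v₂ → c₄ t = c₀ t := by
    intro t h1 h2 h3 h4; simp [hc₄def, hc₃def, hc₂def, hc₁def, h1, h2, h3, h4]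
  have ev_b : ∀ t : V, t ≠ u₂ → t ≠ v₁ → t ≠ v₂ → c₄ t = c₁ t := by
    intro t h2 h3 h4; simp [hc₄def, hc₃def, hc₂def, h2, h3, h4]
  have ev_d : ∀ t : V, t ≠ v₁ → t ≠ v₂ → c₄ t = c₂ t := by
    intro t h3 h4; simp [hc₄def, hc₃def, h3, h4]
  have ev_e : ∀ t : V, t ≠ v₂ → c₄ t = c₃ t := by
    intro t h4; simp [hc₄def, h4]
  have ev_u1 : c₄ u₁ = a := by
    simp [hc₄def, hc₃def, hc₂def, hc₁def, ne1v2, ne1v1, ne12]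
  have ev_u2 : c₄ u₂ = b := by
    simp [hc₄def, hc₃def, hc₂def, ne2v2, ne2v1]
  -- the greedy steps
  have step_v2 : ∀ t : V, t ≠ v₂ → (∃ w, G.Adj v₂ w ∧ G.Adj t w) → c₄ v₂ ≠ c₄ t := by
    rintro t htne ⟨w, hw1, hw2⟩
    have hwmem : w ∈ N v₂ := (hmem _ _).mpr hw1
    rw [hcovv2] at hwmem
    simp only [Finset.mem_insert, Finset.mem_singleton] at hwmem
    have htB : t ∈ Be := by
      rw [hBedef]
      simp only [Finset.mem_sdiff, Finset.mem_union, Finset.mem_insert, Finset.mem_singleton]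
      refine ⟨?_, htne⟩
      rcases hwmem with rfl | rfl
      · exact Or.inl ((hmem _ _).mpr hw2.symm)
      · exact Or.inr ((hmem _ _).mpr hw2.symm)
    have hmemim : c₃ t ∈ Be.image c₃ := Finset.mem_image_of_mem _ htB
    have h4 : c₄ v₂ = e := by simp [hc₄def]
    rw [h4, ev_e t htne]
    intro heq; rw [heq] at he; exact he hmemim
  have step_v1 : v₁ ≠ v₂ → ∀ t : V, t ≠ v₁ → t ≠ v₂ →
      (∃ w, G.Adj v₁ w ∧ G.Adj t w) → c₄ v₁ ≠ c₄ t := by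
    rintro hv12 t htne htne2 ⟨w, hw1, hw2⟩
    have hwmem : w ∈ N v₁ := (hmem _ _).mpr hw1
    rw [hcovv1] at hwmem
    simp only [Finset.mem_insert, Finset.mem_singleton] at hwmem
    have htB : t ∈ Bd := by
      rw [hBddef]
      simp only [Finset.mem_sdiff, Finset.mem_union, Finset.mem_insert, Finset.mem_singleton]
      refine ⟨?_, by push_neg; exact ⟨htne, htne2⟩⟩
      rcases hwmem with rfl | rfl
      · exact Or.inl ((hmem _ _).mpr hw2.symm)
      · exact Or.inr ((hmem _ _).mpr hw2.symm)
    have hmemim : c₂ t ∈ Bd.image c₂ := Finset.mem_image_of_mem _ htB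
    have h4 : c₄ v₁ = d := by simp [hc₄def, hc₃def, hv12]
    rw [h4, ev_d t htne htne2]
    intro heq; rw [heq] at hd; exact hd hmemim
  have step_u2 : ∀ t : V, t ≠ u₂ → t ≠ v₁ → t ≠ v₂ →
      (∃ w, G.Adj u₂ w ∧ G.Adj t w) → c₄ u₂ ≠ c₄ t := by
    rintro t htne htne2 htne3 ⟨w, hw1, hw2⟩
    have hwmem : w ∈ N u₂ := (hmem _ _).mpr hw1
    rw [hcov2] at hwmem
    simp only [Finset.mem_insert, Finset.mem_singleton] at hwmem
    have htB : t ∈ Bb := by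
      rw [hBbdef]
      simp only [Finset.mem_sdiff, Finset.mem_union, Finset.mem_insert, Finset.mem_singleton]
      refine ⟨?_, by push_neg; exact ⟨htne, htne2, htne3⟩⟩
      rcases hwmem with rfl | rfl | rfl
      · exact Or.inl (Or.inl ((hmem _ _).mpr hw2.symm))
      · exact Or.inl (Or.inr ((hmem _ _).mpr hw2.symm))
      · exact Or.inr ((hmem _ _).mpr hw2.symm)
    have hmemim : c₁ t ∈ Bb.image c₁ := Finset.mem_image_of_mem _ htB
    rw [ev_u2, ev_b t htne htne2 htne3]
    intro heq; rw [heq] at hb; exact hb hmemim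
  have step_u1 : ∀ t : V, t ≠ u₁ → t ≠ u₂ → t ≠ v₁ → t ≠ v₂ →
      (∃ w, G.Adj u₁ w ∧ G.Adj t w) → c₄ u₁ ≠ c₄ t := by
    rintro t htne0 htne htne2 htne3 ⟨w, hw1, hw2⟩
    have hwmem : w ∈ N u₁ := (hmem _ _).mpr hw1
    rw [hcov1] at hwmem
    simp only [Finset.mem_insert, Finset.mem_singleton] at hwmem
    have htB : t ∈ Ba := by
      rw [hBadef]
      simp only [Finset.mem_sdiff, Finset.mem_union, Finset.mem_insert, Finset.mem_singleton]
      refine ⟨?_, by push_neg; exact ⟨htne0, htne, htne2, htne3⟩⟩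
      rcases hwmem with rfl | rfl | rfl
      · exact Or.inl (Or.inl ((hmem _ _).mpr hw2.symm))
      · exact Or.inl (Or.inr ((hmem _ _).mpr hw2.symm))
      · exact Or.inr ((hmem _ _).mpr hw2.symm)
    have hmemim : c₀ t ∈ Ba.image c₀ := Finset.mem_image_of_mem _ htB
    rw [ev_u1, ev_out t htne0 htne htne2 htne3]
    intro heq; rw [heq] at ha; exact ha hmemim
  -- assemble the final injective coloring
  apply le_of_coloring G c₄
  rintro u v huv ⟨w, hw1, hw2⟩
  by_cases h1 : u = v₂
  · subst h1; exact step_v2 v (Ne.symm huv) ⟨w, hw1, hw2⟩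
  by_cases h2 : v = v₂
  · subst h2; exact (step_v2 u huv ⟨w, hw2, hw1⟩).symm
  by_cases h3 : u = v₁
  · subst h3; exact step_v1 h1 v (Ne.symm huv) h2 ⟨w, hw1, hw2⟩
  by_cases h4 : v = v₁
  · subst h4; exact (step_v1 h2 u huv h1 ⟨w, hw2, hw1⟩).symm
  by_cases h5 : u = u₂
  · subst h5; exact step_u2 v (Ne.symm huv) h4 h2 ⟨w, hw1, hw2⟩
  by_cases h6 : v = u₂
  · subst h6; exact (step_u2 u huv h3 h1 ⟨w, hw2, hw1⟩).symm
  by_cases h7 : u = u₁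
  · subst h7; exact step_u1 v (Ne.symm huv) h6 h4 h2 ⟨w, hw1, hw2⟩
  by_cases h8 : v = u₁
  · subst h8; exact (step_u1 u huv h5 h3 h1 ⟨w, hw2, hw1⟩).symm
  · rw [ev_out u h7 h5 h3 h1, ev_out v h8 h6 h4 h2]
    refine hc₀ u v huv ⟨w, ⟨hw1, ?_⟩, ⟨hw2, ?_⟩⟩
    · rintro (⟨rfl, rfl⟩ | ⟨rfl, rfl⟩) <;> tauto
    · rintro (⟨rfl, rfl⟩ | ⟨rfl, rfl⟩) <;> tauto
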